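/- In the parameterization Σ = e^λ R_{θ/2} diag(e^ρ, e^{−ρ}) R_{θ/2}^T of 2×2 positive definite matrices, the density |Σ|^{−3/2} dΣ (the Jeffreys prior of the Wishart model) transforms to a density proportional to sinh ρ dλ dρ dθ. -/

import Mathlib

open Real Matrix

/-- Partial derivative in the `i`-th coordinate direction on `Fin d → ℝ`. -/
noncomputable def pderiv' {d : ℕ} (i : Fin d) (f : (Fin d → ℝ) → ℝ) (x : Fin d → ℝ) : ℝ :=
  fderiv ℝ f x (Pi.single i 1)

/-- Rotation matrix by angle `α`. -/
noncomputable def rotM (α : ℝ) : Matrix (Fin 2) (Fin 2) ℝ :=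
  !![Real.cos α, -Real.sin α; Real.sin α, Real.cos α]

/-- The parameterization `Σ(λ,ρ,θ) = e^λ R_{θ/2} diag(e^ρ, e^{−ρ}) R_{θ/2}^T`,
with `(λ,ρ,θ) = (x 0, x 1, x 2)`. -/
noncomputable def sigmaP (x : Fin 3 → ℝ) : Matrix (Fin 2) (Fin 2) ℝ :=
  Real.exp (x 0) •
    (rotM (x 2 / 2) * Matrix.diagonal ![Real.exp (x 1), Real.exp (-x 1)] * (rotM (x 2 / 2))ᵀ)

/-- The independent entries `(Σ₁₁, Σ₁₂, Σ₂₂)` of `Σ(λ,ρ,θ)` as a map `ℝ³ → ℝ³`. -/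
noncomputable def sigmaEntries (x : Fin 3 → ℝ) : Fin 3 → ℝ :=
  ![sigmaP x 0 0, sigmaP x 0 1, sigmaP x 1 1]

/- Auxiliary lemmas -/

lemma sP00 (x : Fin 3 → ℝ) : sigmaP x 0 0 =
    Real.exp (x 0) * (Real.exp (x 1) * (Real.cos (x 2/2) * Real.cos (x 2/2))
      + Real.exp (-x 1) * (Real.sin (x 2/2) * Real.sin (x 2/2))) := by
  simp [sigmaP, rotM, Matrix.mul_apply, Fin.sum_univ_two, Matrix.diagonal_apply,
    Matrix.transpose_apply, Matrix.vecHead, Matrix.vecTail, Matrix.vecMul, dotProduct]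
  ring

lemma sP01 (x : Fin 3 → ℝ) : sigmaP x 0 1 =
    Real.exp (x 0) * ((Real.exp (x 1) - Real.exp (-x 1)) * (Real.cos (x 2/2) * Real.sin (x 2/2))) := by
  simp [sigmaP, rotM, Matrix.mul_apply, Fin.sum_univ_two, Matrix.diagonal_apply,
    Matrix.transpose_apply, Matrix.vecHead, Matrix.vecTail, Matrix.vecMul, dotProduct]
  ring

lemma sP10 (x : Fin 3 → ℝ) : sigmaP x 1 0 =
    Real.exp (x 0) * ((Real.exp (x 1) - Real.exp (-x 1)) * (Real.cos (x 2/2) * Real.sin (x 2/2))) := by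
  simp [sigmaP, rotM, Matrix.mul_apply, Fin.sum_univ_two, Matrix.diagonal_apply,
    Matrix.transpose_apply, Matrix.vecHead, Matrix.vecTail, Matrix.vecMul, dotProduct]
  ring

lemma sP11 (x : Fin 3 → ℝ) : sigmaP x 1 1 =
    Real.exp (x 0) * (Real.exp (x 1) * (Real.sin (x 2/2) * Real.sin (x 2/2))
      + Real.exp (-x 1) * (Real.cos (x 2/2) * Real.cos (x 2/2))) := by
  simp [sigmaP, rotM, Matrix.mul_apply, Fin.sum_univ_two, Matrix.diagonal_apply,
    Matrix.transpose_apply, Matrix.vecHead, Matrix.vecTail, Matrix.vecMul, dotProduct]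
  ring

lemma pderiv_eq {d : ℕ} {i : Fin d} {f : (Fin d → ℝ) → ℝ} {x : Fin d → ℝ}
    {L : (Fin d → ℝ) →L[ℝ] ℝ} (h : HasFDerivAt f L x) :
    pderiv' i f x = L (Pi.single i 1) := by rw [pderiv', h.fderiv]

lemma hcoord (i : Fin 3) (x : Fin 3 → ℝ) :
    HasFDerivAt (fun y : Fin 3 → ℝ => y i)
      (ContinuousLinearMap.proj (R := ℝ) (φ := fun _ : Fin 3 => ℝ) i) x :=
  hasFDerivAt_apply i x

lemma hhalf (x : Fin 3 → ℝ) :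
    HasFDerivAt (fun y : Fin 3 → ℝ => y 2 / 2)
      (((2:ℝ)⁻¹ • ContinuousLinearMap.proj 2 : (Fin 3 → ℝ) →L[ℝ] ℝ)) x := by
  simpa [div_eq_mul_inv] using (hcoord 2 x).mul_const ((2:ℝ)⁻¹)

lemma pd0 (x : Fin 3 → ℝ) (b : Fin 3) :
    pderiv' b (fun y => sigmaEntries y 0) x =
    ![Real.exp (x 0) * (Real.exp (x 1) * (Real.cos (x 2/2) * Real.cos (x 2/2))
        + Real.exp (-x 1) * (Real.sin (x 2/2) * Real.sin (x 2/2))),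
      Real.exp (x 0) * (Real.exp (x 1) * (Real.cos (x 2/2) * Real.cos (x 2/2))
        - Real.exp (-x 1) * (Real.sin (x 2/2) * Real.sin (x 2/2))),
      Real.exp (x 0) * ((Real.exp (-x 1) - Real.exp (x 1)) * (Real.cos (x 2/2) * Real.sin (x 2/2)))] b := by
  have he : (fun y : Fin 3 → ℝ => sigmaEntries y 0) = fun y : Fin 3 → ℝ =>
      Real.exp (y 0) * (Real.exp (y 1) * (Real.cos (y 2/2) * Real.cos (y 2/2))
        + Real.exp (-y 1) * (Real.sin (y 2/2) * Real.sin (y 2/2))) := by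
    funext y; simpa [sigmaEntries] using sP00 y
  rw [he]
  have h := (hcoord 0 x).exp.mul
    (((hcoord 1 x).exp.mul ((hhalf x).cos.mul (hhalf x).cos)).add
      ((hcoord 1 x).neg.exp.mul ((hhalf x).sin.mul (hhalf x).sin)))
  refine (pderiv_eq h).trans ?_
  fin_cases b <;> simp [Pi.single_apply] <;> ring

lemma pd1 (x : Fin 3 → ℝ) (b : Fin 3) :
    pderiv' b (fun y => sigmaEntries y 1) x =
    ![Real.exp (x 0) * ((Real.exp (x 1) - Real.exp (-x 1)) * (Real.cos (x 2/2) * Real.sin (x 2/2))),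
      Real.exp (x 0) * ((Real.exp (x 1) + Real.exp (-x 1)) * (Real.cos (x 2/2) * Real.sin (x 2/2))),
      Real.exp (x 0) * ((Real.exp (x 1) - Real.exp (-x 1)) *
        ((Real.cos (x 2/2) * Real.cos (x 2/2) - Real.sin (x 2/2) * Real.sin (x 2/2)) / 2))] b := by
  have he : (fun y : Fin 3 → ℝ => sigmaEntries y 1) = fun y : Fin 3 → ℝ =>
      Real.exp (y 0) * ((Real.exp (y 1) - Real.exp (-y 1)) * (Real.cos (y 2/2) * Real.sin (y 2/2))) := by
    funext y; simpa [sigmaEntries] using sP01 y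
  rw [he]
  have h := (hcoord 0 x).exp.mul
    (((hcoord 1 x).exp.sub (hcoord 1 x).neg.exp).mul ((hhalf x).cos.mul (hhalf x).sin))
  refine (pderiv_eq h).trans ?_
  fin_cases b <;> simp [Pi.single_apply] <;> ring

lemma pd2 (x : Fin 3 → ℝ) (b : Fin 3) :
    pderiv' b (fun y => sigmaEntries y 2) x =
    ![Real.exp (x 0) * (Real.exp (x 1) * (Real.sin (x 2/2) * Real.sin (x 2/2))
        + Real.exp (-x 1) * (Real.cos (x 2/2) * Real.cos (x 2/2))),
      Real.exp (x 0) * (Real.exp (x 1) * (Real.sin (x 2/2) * Real.sin (x 2/2))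
        - Real.exp (-x 1) * (Real.cos (x 2/2) * Real.cos (x 2/2))),
      Real.exp (x 0) * ((Real.exp (x 1) - Real.exp (-x 1)) * (Real.cos (x 2/2) * Real.sin (x 2/2)))] b := by
  have he : (fun y : Fin 3 → ℝ => sigmaEntries y 2) = fun y : Fin 3 → ℝ =>
      Real.exp (y 0) * (Real.exp (y 1) * (Real.sin (y 2/2) * Real.sin (y 2/2))
        + Real.exp (-y 1) * (Real.cos (y 2/2) * Real.cos (y 2/2))) := by
    funext y; simpa [sigmaEntries] using sP11 y
  rw [he]
  have h := (hcoord 0 x).exp.mul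
    (((hcoord 1 x).exp.mul ((hhalf x).sin.mul (hhalf x).sin)).add
      ((hcoord 1 x).neg.exp.mul ((hhalf x).cos.mul (hhalf x).cos)))
  refine (pderiv_eq h).trans ?_
  fin_cases b <;> simp [Pi.single_apply] <;> ring

/-- in the parameterization `Σ = e^λ R_{θ/2} diag(e^ρ, e^{−ρ}) R_{θ/2}^T`, the
Jeffreys density `|Σ|^{−3/2} dΣ` transforms to a density proportional to `sinh ρ dλ dρ dθ`:
`|Σ|^{−3/2} |det(∂Σ/∂(λ,ρ,θ))| = c sinh ρ` for a constant `c > 0`. -/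
theorem stmt15 :
    ∃ c : ℝ, 0 < c ∧ ∀ x : Fin 3 → ℝ, 0 < x 1 →
      (sigmaP x).det ^ (-(3 : ℝ) / 2) *
          |(Matrix.of fun a b : Fin 3 => pderiv' b (fun y => sigmaEntries y a) x).det|
        = c * Real.sinh (x 1) := by
  refine ⟨2, by norm_num, fun x hx => ?_⟩
  have hEF : Real.exp (x 1) * Real.exp (-x 1) = 1 := by
    rw [← Real.exp_add]; simp
  have hcs : Real.cos (x 2/2) ^ 2 + Real.sin (x 2/2) ^ 2 = 1 := Real.cos_sq_add_sin_sq _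
  have hdetS : (sigmaP x).det = Real.exp (2 * x 0) := by
    rw [Matrix.det_fin_two, sP00, sP01, sP10, sP11]
    have h2 : Real.exp (2 * x 0) = Real.exp (x 0) * Real.exp (x 0) := by
      rw [← Real.exp_add]; ring_nf
    rw [h2]
    linear_combination (Real.exp (x 0))^2 * (Real.cos (x 2/2)^2 + Real.sin (x 2/2)^2)^2 * hEF
      + (Real.exp (x 0))^2 * ((Real.cos (x 2/2)^2 + Real.sin (x 2/2)^2) + 1) * hcs
  have hJ : (Matrix.of fun a b : Fin 3 => pderiv' b (fun y => sigmaEntries y a) x).det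
      = 2 * Real.exp (3 * x 0) * Real.sinh (x 1) := by
    rw [Matrix.det_fin_three]
    simp only [Matrix.of_apply]
    simp only [pd0, pd1, pd2]
    simp only [Matrix.cons_val_zero, Matrix.cons_val_one, Matrix.head_cons,
      Matrix.cons_val_two, Matrix.tail_cons]
    rw [Real.sinh_eq]
    have h3 : Real.exp (3 * x 0) = Real.exp (x 0) * Real.exp (x 0) * Real.exp (x 0) := by
      rw [← Real.exp_add, ← Real.exp_add]; ring_nf
    rw [h3]
    set E := Real.exp (x 1); set F := Real.exp (-x 1)
    set c := Real.cos (x 2/2); set s := Real.sin (x 2/2)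
    linear_combination (Real.exp (x 0))^3 * (E - F) * hEF
      + (Real.exp (x 0))^3 * (E - F) * E * F * ((c^2+s^2)^2 + (c^2+s^2) + 1) * hcs
  rw [hdetS, hJ]
  have hpos : 0 < 2 * Real.exp (3 * x 0) * Real.sinh (x 1) := by
    have := Real.sinh_pos_iff.mpr hx
    positivity
  rw [abs_of_pos hpos]
  rw [← Real.exp_mul]
  have hone : Real.exp (2 * x 0 * (-(3:ℝ) / 2)) * Real.exp (3 * x 0) = 1 := by
    have hz : 2 * x 0 * (-(3:ℝ) / 2) + 3 * x 0 = 0 := by ring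
    rw [← Real.exp_add, hz, Real.exp_zero]
  linear_combination 2 * Real.sinh (x 1) * hone
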